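/- Let G be a directed graph and let P be a directed path p₀, …, p_{n-1} in G. For indices j < i, call the pair (i,j) a detour if (1) there is a walk in G from p_i to p_j that avoids all vertices p_k with k < j, and (2) there is no i' > i for which a walk from p_{i'} to p_j avoiding all vertices p_k with k < j exists. Then detours do not cross: there are no two detours (u,v) and (w,x) with v < x < u < w. -/

import Mathlib

/-- A walk in the directed graph with edge relation `E`: a nonempty list of vertices
starting at `u`, ending at `v`, with every consecutive pair an edge. -/
def IsWalk {V : Type*} (E : V → V → Prop) (l : List V) (u v : V) : Prop :=
  l ≠ [] ∧ l.head? = some u ∧ l.getLast? = some v ∧ l.Chain' E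

lemma walk_append {V : Type*} (E : V → V → Prop) {l₁ l₂ : List V} {a b c : V}
    (h₁ : IsWalk E l₁ a b) (h₂ : IsWalk E l₂ b c) :
    IsWalk E (l₁ ++ l₂.tail) a c := by
  obtain ⟨hne₁, hh₁, hl₁, hc₁⟩ := h₁
  obtain ⟨hne₂, hh₂, hl₂, hc₂⟩ := h₂
  obtain ⟨b', t, rfl⟩ := List.exists_cons_of_ne_nil hne₂
  obtain rfl : b' = b := by simpa using hh₂
  rw [List.Chain', List.isChain_cons] at hc₂
  refine ⟨by simp [hne₁], ?_, ?_, ?_⟩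
  · obtain ⟨a', t₁, rfl⟩ := List.exists_cons_of_ne_nil hne₁
    simpa using hh₁
  · rcases eq_or_ne t [] with rfl | ht
    · have : b' = c := by simpa using hl₂
      simpa [this] using hl₁
    · simp only [List.tail_cons]
      rw [List.getLast?_append_of_ne_nil _ ht]
      rwa [show b' :: t = [b'] ++ t from rfl, List.getLast?_append_of_ne_nil _ ht] at hl₂
  · rw [List.Chain', List.isChain_append]
    refine ⟨hc₁, hc₂.2, ?_⟩
    intro y hy z hz
    have : y = b' := by rw [hl₁] at hy; simpa using hy.symm
    subst this
    exact hc₂.1 z hz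

lemma path_walk {V : Type*} {n : ℕ} (E : V → V → Prop) (p : Fin n → V)
    (hch : ∀ (i : ℕ) (h : i + 1 < n),
      E (p ⟨i, Nat.lt_of_succ_lt h⟩) (p ⟨i + 1, h⟩)) :
    ∀ (d : ℕ) (a b : Fin n), a ≤ b → b.val - a.val = d →
      ∃ l, IsWalk E l (p a) (p b) ∧ ∀ y ∈ l, ∃ m : Fin n, a ≤ m ∧ m ≤ b ∧ y = p m := by
  intro d
  induction d with
  | zero =>
    intro a b hab hd
    have : a = b := Fin.ext (by omega)
    subst this
    exact ⟨[p a], ⟨by simp, by simp, by simp, List.isChain_singleton _⟩,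
      fun y hy => ⟨a, le_refl _, le_refl _, by simpa using hy⟩⟩
  | succ d ih =>
    intro a b hab hd
    have hlt : a.val + 1 < n := by have := b.isLt; omega
    set a' : Fin n := ⟨a.val + 1, hlt⟩ with ha'
    have ha'b : a' ≤ b := by simp [Fin.le_def, ha']; omega
    obtain ⟨l, ⟨hne, hh, hl, hc⟩, hmem⟩ := ih a' b ha'b (by simp [ha']; omega)
    refine ⟨p a :: l, ⟨by simp, by simp, ?_, ?_⟩, ?_⟩
    · rw [show p a :: l = [p a] ++ l from rfl, List.getLast?_append_of_ne_nil _ hne]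
      exact hl
    · rw [List.Chain', List.isChain_cons]
      refine ⟨?_, hc⟩
      intro y hy
      obtain rfl : y = p a' := by rw [hh] at hy; simpa using hy.symm
      have := hch a.val hlt
      convert this using 2
    · intro y hy
      rcases List.mem_cons.1 hy with rfl | hy
      · exact ⟨a, le_refl _, hab, rfl⟩
      · obtain ⟨m, h1, h2, h3⟩ := hmem y hy
        exact ⟨m, le_trans (Fin.le_def.2 (by simp [ha'])) h1, h2, h3⟩

/-- For indices `j < i` of the directed path `p`, `(i,j)` is a detour if there is a walk
in `G` from `p i` to `p j` avoiding all vertices `p k` with `k < j`, and no `i' > i`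
admits such a walk. -/
def Detour {V : Type*} {n : ℕ} (E : V → V → Prop) (p : Fin n → V) (i j : Fin n) : Prop :=
  j < i ∧
  (∃ l, IsWalk E l (p i) (p j) ∧ ∀ x ∈ l, ∀ k : Fin n, k < j → x ≠ p k) ∧
  ∀ i' : Fin n, i < i' →
    ¬ ∃ l, IsWalk E l (p i') (p j) ∧ ∀ x ∈ l, ∀ k : Fin n, k < j → x ≠ p k

/-- Detours do not cross: there are no two detours `(u,v)` and `(w,x)`
with `v < x < u < w`. -/
theorem stmt_3 {V : Type*} [Fintype V] {n : ℕ} (E : V → V → Prop)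
    (p : Fin n → V) (hinj : Function.Injective p)
    (hch : ∀ (i : ℕ) (h : i + 1 < n),
      E (p ⟨i, Nat.lt_of_succ_lt h⟩) (p ⟨i + 1, h⟩)) :
    ¬ ∃ u v w x : Fin n, Detour E p u v ∧ Detour E p w x ∧ v < x ∧ x < u ∧ u < w := by
  rintro ⟨u, v, w, x, ⟨hvu, ⟨l₁, hl₁, havoid₁⟩, hmax⟩, ⟨hxw, ⟨l₂, hl₂, havoid₂⟩, -⟩,
    hvx, hxu, huw⟩
  obtain ⟨lm, hlm, hmem⟩ := path_walk E p hch (u.val - x.val) x u (le_of_lt hxu) rfl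
  refine hmax w huw ⟨l₂ ++ (lm ++ l₁.tail).tail,
    walk_append E hl₂ (walk_append E hlm hl₁), ?_⟩
  intro y hy k hk
  rcases List.mem_append.1 hy with h | h
  · exact havoid₂ y h k (hk.trans hvx)
  · rcases List.mem_append.1 (List.mem_of_mem_tail h) with h | h
    · obtain ⟨m, hxm, _, rfl⟩ := hmem y h
      intro he
      have := hinj he
      subst this
      have := Fin.lt_def.1 hk
      have := Fin.lt_def.1 hvx
      have := Fin.le_def.1 hxm
      omega
    · exact havoid₁ y (List.mem_of_mem_tail h) k hk
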